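/- Let Q be the L²-orthogonal projection from X = span({h_i : 0 ≤ i ≤ 2^{2n}−1}) ⊂ L¹[0,1] onto Y = span(⋃_{k=0}^{n−1} H_{2k}) (the even Haar levels). Then ‖Q‖_{L¹→L¹} ≥ (2n+1)/3. -/

import Mathlib

open Classical in
/-- The Haar system on `(0,1]`: `h₀ = 1_{(0,1]}`, and for `i = 2^m + j` (`0 ≤ j < 2^m`),
`h_i = 1_{(j/2^m,(2j+1)/2^{m+1}]} - 1_{((2j+1)/2^{m+1},(j+1)/2^m]}`. -/
noncomputable def haar (i : ℕ) (t : ℝ) : ℝ :=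
  if i = 0 then (if 0 < t ∧ t ≤ 1 then 1 else 0)
  else
    let m := Nat.log2 i
    let j : ℝ := ((i - 2 ^ m : ℕ) : ℝ)
    if j / 2 ^ m < t ∧ t ≤ (2 * j + 1) / 2 ^ (m + 1) then 1
    else if (2 * j + 1) / 2 ^ (m + 1) < t ∧ t ≤ (j + 1) / 2 ^ m then -1
    else 0

/-- The `k`-th level of the Haar system: `H_k = {h_i : 2^k ≤ i < 2^{k+1}}`. -/
def haarLevel (k : ℕ) : Set (ℝ → ℝ) := haar '' Set.Ico (2 ^ k) (2 ^ (k + 1))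

/-- The `L²[0,1]` inner product. -/
noncomputable def L2inner (f g : ℝ → ℝ) : ℝ := ∫ t in (0:ℝ)..1, f t * g t

/-- The `L¹[0,1]` norm. -/
noncomputable def L1normI (f : ℝ → ℝ) : ℝ := ∫ t in (0:ℝ)..1, |f t|

open MeasureTheory intervalIntegral Set

/-- indicator of `(a,b]` -/
noncomputable def ind (a b : ℝ) : ℝ → ℝ := fun t => if a < t ∧ t ≤ b then 1 else 0

noncomputable def psi (m j : ℕ) : ℝ → ℝ := fun t =>
  ind ((2*(j:ℝ))/2^(m+1)) ((2*(j:ℝ)+1)/2^(m+1)) t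
    - ind ((2*(j:ℝ)+1)/2^(m+1)) ((2*(j:ℝ)+2)/2^(m+1)) t

lemma ind_eq_indicator (a b : ℝ) : ind a b = (Set.Ioc a b).indicator (fun _ => 1) := by
  funext t
  simp [ind, Set.indicator, Set.mem_Ioc]

lemma ind_measurable (a b : ℝ) : Measurable (ind a b) := by
  rw [ind_eq_indicator]
  exact (measurable_const).indicator measurableSet_Ioc

lemma ind_II (a b x y : ℝ) : IntervalIntegrable (ind a b) volume x y := by
  rw [ind_eq_indicator, intervalIntegrable_iff]
  exact (MeasureTheory.integrableOn_const measure_Ioc_lt_top.ne).indicator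
    measurableSet_Ioc

lemma integral_ind {a b : ℝ} (h0 : 0 ≤ a) (h1 : b ≤ 1) :
    ∫ t in (0:ℝ)..1, ind a b t = max (b - a) 0 := by
  rcases le_or_gt a b with hab | hab
  · rw [ind_eq_indicator, intervalIntegral.integral_of_le zero_le_one,
      MeasureTheory.setIntegral_indicator measurableSet_Ioc]
    have : Set.Ioc (0:ℝ) 1 ∩ Set.Ioc a b = Set.Ioc a b := by
      apply Set.inter_eq_self_of_subset_right
      exact Set.Ioc_subset_Ioc h0 h1
    rw [this, MeasureTheory.setIntegral_const, Real.volume_real_Ioc_of_le hab, smul_eq_mul, mul_one,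
      max_eq_left (by linarith)]
  · have : ind a b = fun _ => (0:ℝ) := by
      funext t; simp only [ind, ite_eq_right_iff]
      rintro ⟨h2, h3⟩; linarith
    rw [this, max_eq_right (by linarith)]
    simp

lemma ind_mul (a b c d t : ℝ) : ind a b t * ind c d t = ind (max a c) (min b d) t := by
  simp only [ind, max_lt_iff, le_min_iff]
  by_cases h1 : a < t <;> by_cases h2 : t ≤ b <;> by_cases h3 : c < t <;> by_cases h4 : t ≤ d <;>
    simp [h1, h2, h3, h4]

lemma haar_zero_eq : haar 0 = ind 0 1 := by
  funext t; simp [haar, ind]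

lemma log2_pow_add {m j : ℕ} (hj : j < 2^m) : Nat.log2 (2^m + j) = m := by
  rw [Nat.log2_eq_log_two]
  exact Nat.log_eq_of_pow_le_of_lt_pow (Nat.le_add_right _ _) (by ring_nf; omega)

lemma haar_succ_eq {m j : ℕ} (hj : j < 2^m) : haar (2^m + j) = psi m j := by
  funext t
  have hne : 2^m + j ≠ 0 := by positivity
  simp only [haar, hne, if_false, log2_pow_add hj, Nat.add_sub_cancel_left]
  have e1 : ((j:ℝ))/2^m = (2*(j:ℝ))/2^(m+1) := by
    rw [pow_succ]; field_simp
  have e2 : ((j:ℝ)+1)/2^m = (2*(j:ℝ)+2)/2^(m+1) := by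
    rw [pow_succ]; field_simp
  rw [e1, e2]
  simp only [psi, ind]
  by_cases hA : 2*(j:ℝ)/2^(m+1) < t ∧ t ≤ (2*(j:ℝ)+1)/2^(m+1) <;>
    by_cases hB : (2*(j:ℝ)+1)/2^(m+1) < t ∧ t ≤ (2*(j:ℝ)+2)/2^(m+1)
  · exact absurd (lt_of_le_of_lt hA.2 hB.1) (lt_irrefl t)
  all_goals simp [hA, hB]

lemma exists_decomp (i : ℕ) (hi : 1 ≤ i) : ∃ m j, j < 2^m ∧ i = 2^m + j := by
  refine ⟨Nat.log 2 i, i - 2^(Nat.log 2 i), ?_, ?_⟩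
  · have h1 := Nat.lt_pow_succ_log_self (by norm_num : 1 < 2) i
    have h2 := Nat.pow_log_le_self 2 (by omega : i ≠ 0)
    have : 2^(Nat.log 2 i + 1) = 2 * 2^(Nat.log 2 i) := by ring
    omega
  · have h2 := Nat.pow_log_le_self 2 (by omega : i ≠ 0)
    omega

lemma psi_measurable (m j : ℕ) : Measurable (psi m j) :=
  (ind_measurable _ _).sub (ind_measurable _ _)

lemma haar_measurable (i : ℕ) : Measurable (haar i) := by
  rcases Nat.eq_zero_or_pos i with rfl | hi
  · rw [haar_zero_eq]; exact ind_measurable _ _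
  · obtain ⟨m, j, hj, rfl⟩ := exists_decomp i hi
    rw [haar_succ_eq hj]; exact psi_measurable m j

lemma ind_bound (a b t : ℝ) : |ind a b t| ≤ 1 := by
  simp only [ind]; split_ifs <;> norm_num

lemma haar_bound (i : ℕ) (t : ℝ) : |haar i t| ≤ 1 := by
  rcases Nat.eq_zero_or_pos i with rfl | hi
  · rw [haar_zero_eq]; exact ind_bound _ _ _
  · obtain ⟨m, j, hj, rfl⟩ := exists_decomp i hi
    rw [haar_succ_eq hj]
    simp only [psi, ind]
    split_ifs <;> norm_num

lemma II_of_bdd {f : ℝ → ℝ} (hm : Measurable f) {C : ℝ} (hb : ∀ t, |f t| ≤ C) (x y : ℝ) :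
    IntervalIntegrable f volume x y := by
  rw [intervalIntegrable_iff]
  exact MeasureTheory.Measure.integrableOn_of_bounded measure_Ioc_lt_top.ne
    hm.aestronglyMeasurable (Filter.Eventually.of_forall hb)

lemma haar_II (i : ℕ) (x y : ℝ) : IntervalIntegrable (haar i) volume x y :=
  II_of_bdd (haar_measurable i) (haar_bound i) x y

lemma haar_mul_II (i i' : ℕ) (x y : ℝ) :
    IntervalIntegrable (fun t => haar i t * haar i' t) volume x y := by
  refine II_of_bdd ((haar_measurable i).mul (haar_measurable i')) (C := 1) (fun t => ?_) x y
  rw [Pi.mul_apply, abs_mul]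
  calc |haar i t| * |haar i' t| ≤ 1 * 1 :=
    mul_le_mul (haar_bound i t) (haar_bound i' t) (abs_nonneg _) zero_le_one
  _ = 1 := mul_one 1

lemma cast_sub_max (x y : ℕ) : ((x:ℝ) - y) ⊔ 0 = ((x - y : ℕ) : ℝ) := by
  rcases le_total y x with h | h
  · have : (y:ℝ) ≤ x := by exact_mod_cast h
    rw [max_eq_left (by linarith)]
    push_cast [h]; ring
  · have : (x:ℝ) ≤ y := by exact_mod_cast h
    rw [Nat.sub_eq_zero_of_le h, max_eq_right (by linarith)]
    simp

lemma integral_psi {m j : ℕ} (hj : j < 2^m) : ∫ t in (0:ℝ)..1, psi m j t = 0 := by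
  have hN : (0:ℝ) < 2^(m+1) := by positivity
  have hub : ((2*(j:ℝ)+2))/2^(m+1) ≤ 1 := by
    rw [div_le_one hN]
    have : ((j:ℝ)+1) ≤ 2^m := by exact_mod_cast hj
    have h2 : (2:ℝ)^(m+1) = 2 * 2^m := by ring
    linarith
  have hub1 : ((2*(j:ℝ)+1))/2^(m+1) ≤ 1 := le_trans (by gcongr; linarith) hub
  simp only [psi]
  rw [intervalIntegral.integral_sub (ind_II _ _ _ _) (ind_II _ _ _ _),
    integral_ind (by positivity) hub1, integral_ind (by positivity) hub]
  have e1 : (2*(j:ℝ)+1)/2^(m+1) - 2*(j:ℝ)/2^(m+1) = 1/2^(m+1) := by ring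
  have e2 : (2*(j:ℝ)+2)/2^(m+1) - (2*(j:ℝ)+1)/2^(m+1) = 1/2^(m+1) := by ring
  rw [e1, e2]
  ring

lemma integral_psi_sq {m j : ℕ} (hj : j < 2^m) :
    ∫ t in (0:ℝ)..1, psi m j t * psi m j t = ((2:ℝ)^m)⁻¹ := by
  have hN : (0:ℝ) < 2^(m+1) := by positivity
  have hBC : (2*(j:ℝ)+1)/2^(m+1) ≤ (2*(j:ℝ)+2)/2^(m+1) := by gcongr; linarith
  have hAB : (2*(j:ℝ))/2^(m+1) ≤ (2*(j:ℝ)+1)/2^(m+1) := by gcongr; linarith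
  have hpt : ∀ t, psi m j t * psi m j t =
      ind ((2*(j:ℝ))/2^(m+1)) ((2*(j:ℝ)+2)/2^(m+1)) t := by
    intro t
    simp only [psi, ind]
    by_cases hA : 2*(j:ℝ)/2^(m+1) < t ∧ t ≤ (2*(j:ℝ)+1)/2^(m+1) <;>
      by_cases hB : (2*(j:ℝ)+1)/2^(m+1) < t ∧ t ≤ (2*(j:ℝ)+2)/2^(m+1)
    · exact absurd (lt_of_le_of_lt hA.2 hB.1) (lt_irrefl t)
    · rw [if_pos hA, if_neg hB, if_pos ⟨hA.1, le_trans hA.2 hBC⟩]; ring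
    · rw [if_neg hA, if_pos hB, if_pos ⟨lt_of_le_of_lt hAB hB.1, hB.2⟩]; ring
    · rw [if_neg hA, if_neg hB, if_neg ?_]
      · ring
      · rintro ⟨h1, h2⟩
        rcases le_or_gt t ((2*(j:ℝ)+1)/2^(m+1)) with h | h
        · exact hA ⟨h1, h⟩
        · exact hB ⟨h, h2⟩
  simp only [hpt]
  have hub : ((2*(j:ℝ)+2))/2^(m+1) ≤ 1 := by
    rw [div_le_one hN]
    have : ((j:ℝ)+1) ≤ 2^m := by exact_mod_cast hj
    have h2 : (2:ℝ)^(m+1) = 2 * 2^m := by ring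
    linarith
  rw [integral_ind (by positivity) hub]
  have e : (2*(j:ℝ)+2)/2^(m+1) - 2*(j:ℝ)/2^(m+1) = ((2:ℝ)^m)⁻¹ := by
    have h2 : (2:ℝ)^(m+1) = 2 * 2^m := by ring
    rw [h2]
    have : (2:ℝ)^m ≠ 0 := by positivity
    field_simp
    ring
  rw [e, max_eq_left (by positivity)]

lemma ind_mul_disj {a b c d t : ℝ} (h : b ≤ c) : ind a b t * ind c d t = 0 := by
  simp only [ind]
  split_ifs with h1 h2 h2 <;> try ring
  exact absurd (lt_of_le_of_lt (le_trans h1.2 h) h2.1) (lt_irrefl t)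

lemma psi_same_level_pt {m j j' : ℕ} (h : j < j') (t : ℝ) :
    psi m j t * psi m j' t = 0 := by
  have hN : (0:ℝ) < 2^(m+1) := by positivity
  have key : ∀ x y : ℝ, x ≤ y → x/2^(m+1) ≤ y/2^(m+1) := fun x y hxy => by gcongr
  have hjj : (2*(j:ℝ)+2) ≤ 2*(j':ℝ) := by
    have : (j:ℝ) + 1 ≤ j' := by exact_mod_cast h
    linarith
  have e : psi m j t * psi m j' t =
      ind ((2*(j:ℝ))/2^(m+1)) ((2*(j:ℝ)+1)/2^(m+1)) t * ind ((2*(j':ℝ))/2^(m+1)) ((2*(j':ℝ)+1)/2^(m+1)) t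
      - ind ((2*(j:ℝ))/2^(m+1)) ((2*(j:ℝ)+1)/2^(m+1)) t * ind ((2*(j':ℝ)+1)/2^(m+1)) ((2*(j':ℝ)+2)/2^(m+1)) t
      - ind ((2*(j:ℝ)+1)/2^(m+1)) ((2*(j:ℝ)+2)/2^(m+1)) t * ind ((2*(j':ℝ))/2^(m+1)) ((2*(j':ℝ)+1)/2^(m+1)) t
      + ind ((2*(j:ℝ)+1)/2^(m+1)) ((2*(j:ℝ)+2)/2^(m+1)) t * ind ((2*(j':ℝ)+1)/2^(m+1)) ((2*(j':ℝ)+2)/2^(m+1)) t := by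
    simp only [psi]; ring
  rw [e, ind_mul_disj (key _ _ (by linarith)), ind_mul_disj (key _ _ (by linarith)),
    ind_mul_disj (key _ _ (by linarith)), ind_mul_disj (key _ _ (by linarith))]
  ring
lemma integral_psi_mul_lt {m j m' j' : ℕ} (hj : j < 2^m) (hj' : j' < 2^(m')) (hmm : m < m') :
    ∫ t in (0:ℝ)..1, psi m j t * psi m' j' t = 0 := by
  obtain ⟨c, rfl⟩ : ∃ c, m' = m + c + 1 := ⟨m' - m - 1, by omega⟩
  have hN : (0:ℝ) < 2^(m+c+1+1) := by positivity
  have hD : (0:ℝ) < (2*(2:ℝ)^c) := by positivity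
  have hsplit : (2:ℝ)^(m+c+1+1) = 2^(m+1)*(2*2^c) := by ring
  have conv : ∀ x : ℝ, x/2^(m+1) = (x*(2*2^c))/2^(m+c+1+1) := by
    intro x; rw [hsplit, mul_div_mul_right _ _ (ne_of_gt hD)]
  have e1 : (2*(j:ℝ))/2^(m+1) = ((4*(j*2^c) : ℕ):ℝ)/2^(m+c+1+1) := by
    rw [conv]; push_cast; ring_nf
  have e2 : (2*(j:ℝ)+1)/2^(m+1) = ((4*(j*2^c)+2*2^c : ℕ):ℝ)/2^(m+c+1+1) := by
    rw [conv]; push_cast; ring_nf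
  have e3 : (2*(j:ℝ)+2)/2^(m+1) = ((4*(j*2^c)+4*2^c : ℕ):ℝ)/2^(m+c+1+1) := by
    rw [conv]; push_cast; ring_nf
  have f1 : (2*(j':ℝ))/2^(m+c+1+1) = ((2*j' : ℕ):ℝ)/2^(m+c+1+1) := by push_cast; ring_nf
  have f2 : (2*(j':ℝ)+1)/2^(m+c+1+1) = ((2*j'+1 : ℕ):ℝ)/2^(m+c+1+1) := by push_cast; ring_nf
  have f3 : (2*(j':ℝ)+2)/2^(m+c+1+1) = ((2*j'+2 : ℕ):ℝ)/2^(m+c+1+1) := by push_cast; ring_nf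
  have hpt : ∀ t, psi m j t * psi (m+c+1) j' t =
      ind (max (((4*(j*2^c) : ℕ):ℝ)/2^(m+c+1+1)) (((2*j' : ℕ):ℝ)/2^(m+c+1+1)))
          (min (((4*(j*2^c)+2*2^c : ℕ):ℝ)/2^(m+c+1+1)) (((2*j'+1 : ℕ):ℝ)/2^(m+c+1+1))) t
      - ind (max (((4*(j*2^c) : ℕ):ℝ)/2^(m+c+1+1)) (((2*j'+1 : ℕ):ℝ)/2^(m+c+1+1)))
          (min (((4*(j*2^c)+2*2^c : ℕ):ℝ)/2^(m+c+1+1)) (((2*j'+2 : ℕ):ℝ)/2^(m+c+1+1))) t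
      - ind (max (((4*(j*2^c)+2*2^c : ℕ):ℝ)/2^(m+c+1+1)) (((2*j' : ℕ):ℝ)/2^(m+c+1+1)))
          (min (((4*(j*2^c)+4*2^c : ℕ):ℝ)/2^(m+c+1+1)) (((2*j'+1 : ℕ):ℝ)/2^(m+c+1+1))) t
      + ind (max (((4*(j*2^c)+2*2^c : ℕ):ℝ)/2^(m+c+1+1)) (((2*j'+1 : ℕ):ℝ)/2^(m+c+1+1)))
          (min (((4*(j*2^c)+4*2^c : ℕ):ℝ)/2^(m+c+1+1)) (((2*j'+2 : ℕ):ℝ)/2^(m+c+1+1))) t := by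
    intro t
    simp only [psi, e1, e2, e3, f1, f2, f3, ← ind_mul]
    ring
  simp only [hpt]
  rw [intervalIntegral.integral_add (((ind_II _ _ _ _).sub (ind_II _ _ _ _)).sub (ind_II _ _ _ _))
      (ind_II _ _ _ _),
    intervalIntegral.integral_sub ((ind_II _ _ _ _).sub (ind_II _ _ _ _)) (ind_II _ _ _ _),
    intervalIntegral.integral_sub (ind_II _ _ _ _) (ind_II _ _ _ _)]
  have hub : ∀ x : ℕ, x ≤ 2*j'+2 → ((x : ℕ):ℝ)/2^(m+c+1+1) ≤ 1 := by
    intro x hx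
    rw [div_le_one hN]
    have h1 : ((j':ℝ)+1) ≤ 2^(m+c+1) := by exact_mod_cast hj'
    have h2 : (x:ℝ) ≤ 2*(j':ℝ)+2 := by exact_mod_cast hx
    have h3 : (2:ℝ)^(m+c+1+1) = 2*2^(m+c+1) := by ring
    linarith
  have hmaxnn : ∀ x y : ℕ, (0:ℝ) ≤ max ((x:ℝ)/2^(m+c+1+1)) ((y:ℝ)/2^(m+c+1+1)) :=
    fun x y => le_trans (by positivity) (le_max_left _ _)
  have hminub : ∀ (x y : ℕ), y ≤ 2*j'+2 →
      min ((x:ℝ)/2^(m+c+1+1)) ((y:ℝ)/2^(m+c+1+1)) ≤ 1 :=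
    fun x y hy => le_trans (min_le_right _ _) (hub y hy)
  rw [integral_ind (hmaxnn _ _) (hminub _ _ (by omega)),
    integral_ind (hmaxnn _ _) (hminub _ _ (by omega)),
    integral_ind (hmaxnn _ _) (hminub _ _ (by omega)),
    integral_ind (hmaxnn _ _) (hminub _ _ (by omega))]
  simp only [max_div_div_right hN.le, min_div_div_right hN.le, ← Nat.cast_max, ← Nat.cast_min,
    div_sub_div_same]
  have hmax0 : ∀ x : ℝ, (x/2^(m+c+1+1)) ⊔ 0 = (x ⊔ 0)/2^(m+c+1+1) := by
    intro x; rw [← max_div_div_right hN.le, zero_div]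
  simp only [hmax0, cast_sub_max]
  have key : ∀ (A δ q : ℕ), 1 ≤ δ →
      (min (4*A+2*δ) (2*q+1) - max (4*A) (2*q)) + (min (4*A+4*δ) (2*q+2) - max (4*A+2*δ) (2*q+1))
      = (min (4*A+2*δ) (2*q+2) - max (4*A) (2*q+1))
        + (min (4*A+4*δ) (2*q+1) - max (4*A+2*δ) (2*q)) := by
    intro A δ q h1; omega
  have hc : (((min (4*(j*2^c)+2*2^c) (2*j'+1) - max (4*(j*2^c)) (2*j') : ℕ)):ℝ)
      + ((min (4*(j*2^c)+4*2^c) (2*j'+2) - max (4*(j*2^c)+2*2^c) (2*j'+1) : ℕ):ℝ)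
      = ((min (4*(j*2^c)+2*2^c) (2*j'+2) - max (4*(j*2^c)) (2*j'+1) : ℕ):ℝ)
        + ((min (4*(j*2^c)+4*2^c) (2*j'+1) - max (4*(j*2^c)+2*2^c) (2*j') : ℕ):ℝ) := by
    have := key (j*2^c) (2^c) j' Nat.one_le_two_pow
    exact_mod_cast congrArg (Nat.cast (R := ℝ)) this
  field_simp
  linarith [hc]
lemma integral_haar_mul_aux {m j m' j' : ℕ} (hj : j < 2^m) (hj' : j' < 2^(m'))
    (h : m < m' ∨ (m = m' ∧ j < j')) :
    ∫ t in (0:ℝ)..1, psi m j t * psi m' j' t = 0 := by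
  rcases h with h | ⟨rfl, h⟩
  · exact integral_psi_mul_lt hj hj' h
  · simp only [psi_same_level_pt h]
    simp

lemma integral_haar_mul {i i' : ℕ} (hi : 1 ≤ i) (hi' : 1 ≤ i') (hne : i ≠ i') :
    ∫ t in (0:ℝ)..1, haar i t * haar i' t = 0 := by
  obtain ⟨m, j, hj, rfl⟩ := exists_decomp i hi
  obtain ⟨m', j', hj', rfl⟩ := exists_decomp i' hi'
  rw [haar_succ_eq hj, haar_succ_eq hj']
  have hcomm : (fun t => psi m j t * psi m' j' t) = (fun t => psi m' j' t * psi m j t) := by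
    funext t; ring
  rcases lt_trichotomy m m' with h | rfl | h
  · exact integral_haar_mul_aux hj hj' (Or.inl h)
  · have hjj : j ≠ j' := fun hj0 => hne (by rw [hj0])
    rcases lt_or_gt_of_ne hjj with h | h
    · exact integral_haar_mul_aux hj hj' (Or.inr ⟨rfl, h⟩)
    · simp only [hcomm]
      exact integral_haar_mul_aux hj' hj (Or.inr ⟨rfl, h⟩)
  · simp only [hcomm]
    exact integral_haar_mul_aux hj' hj (Or.inl h)

lemma integral_haar_sq {m j : ℕ} (hj : j < 2^m) :
    ∫ t in (0:ℝ)..1, haar (2^m + j) t * haar (2^m + j) t = ((2:ℝ)^m)⁻¹ := by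
  rw [haar_succ_eq hj]; exact integral_psi_sq hj

lemma integral_haar_zero_mul {i : ℕ} (hi : 1 ≤ i) :
    ∫ t in (0:ℝ)..1, haar 0 t * haar i t = 0 := by
  obtain ⟨m, j, hj, rfl⟩ := exists_decomp i hi
  rw [haar_succ_eq hj]
  have hN : (0:ℝ) < 2^(m+1) := by positivity
  have hub : ((2*(j:ℝ)+2))/2^(m+1) ≤ 1 := by
    rw [div_le_one hN]
    have : ((j:ℝ)+1) ≤ 2^m := by exact_mod_cast hj
    have h2 : (2:ℝ)^(m+1) = 2 * 2^m := by ring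
    linarith
  have hub1 : ((2*(j:ℝ)+1))/2^(m+1) ≤ 1 := le_trans (by gcongr; linarith) hub
  have hpt : ∀ t, haar 0 t * psi m j t = psi m j t := by
    intro t
    rw [haar_zero_eq]
    simp only [ind, psi]
    by_cases h : 0 < t ∧ t ≤ 1
    · rw [if_pos h]; ring
    · rw [if_neg h]
      push_neg at h
      rcases le_or_gt t 0 with h0 | h0
      · rw [if_neg, if_neg]
        · ring
        · rintro ⟨h1, _⟩; have : (0:ℝ) ≤ (2*(j:ℝ)+1)/2^(m+1) := by positivity
          linarith
        · rintro ⟨h1, _⟩; have : (0:ℝ) ≤ (2*(j:ℝ))/2^(m+1) := by positivity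
          linarith
      · have h1 := h h0
        rw [if_neg, if_neg]
        · ring
        · rintro ⟨_, h2⟩; linarith
        · rintro ⟨_, h2⟩; linarith
  simp only [hpt]
  exact integral_psi hj

lemma haar_pow (m : ℕ) : haar (2^m) = psi m 0 := by
  rw [show (2^m : ℕ) = 2^m + 0 from rfl, haar_succ_eq (by positivity)]

lemma psi_zero_eq (m : ℕ) :
    psi m 0 = fun t => ind 0 (((2:ℝ)^(m+1))⁻¹) t - ind (((2:ℝ)^(m+1))⁻¹) (((2:ℝ)^m)⁻¹) t := by
  have e0 : (2*((0:ℕ):ℝ))/2^(m+1) = 0 := by norm_num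
  have e1 : (2*((0:ℕ):ℝ)+1)/2^(m+1) = ((2:ℝ)^(m+1))⁻¹ := by norm_num
  have e2 : (2*((0:ℕ):ℝ)+2)/2^(m+1) = ((2:ℝ)^m)⁻¹ := by
    have : (2:ℝ)^(m+1) = 2^m * 2 := by ring
    rw [this]
    have h : (2:ℝ)^m ≠ 0 := by positivity
    field_simp
    ring
  funext t
  simp only [psi, e0, e1, e2]
lemma inv_pow_le {a b : ℕ} (h : b ≤ a) : ((2:ℝ)^a)⁻¹ ≤ ((2:ℝ)^b)⁻¹ := by
  apply inv_anti₀ (by positivity)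
  exact pow_le_pow_right₀ (by norm_num) h

lemma inv_pow_pos (a : ℕ) : (0:ℝ) < ((2:ℝ)^a)⁻¹ := by positivity

lemma haar_pow_val_pos {m : ℕ} {t : ℝ} (h0 : 0 < t) (h1 : t ≤ ((2:ℝ)^(m+1))⁻¹) :
    haar (2^m) t = 1 := by
  rw [haar_pow, psi_zero_eq]
  simp only [ind]
  rw [if_pos ⟨h0, h1⟩, if_neg (by rintro ⟨h2, _⟩; linarith)]
  ring

lemma haar_pow_val_neg {m : ℕ} {t : ℝ} (h0 : ((2:ℝ)^(m+1))⁻¹ < t) (h1 : t ≤ ((2:ℝ)^m)⁻¹) :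
    haar (2^m) t = -1 := by
  rw [haar_pow, psi_zero_eq]
  simp only [ind]
  rw [if_neg (by rintro ⟨_, h2⟩; linarith), if_pos ⟨h0, h1⟩]
  ring

lemma haar_pow_val_out {m : ℕ} {t : ℝ} (h0 : ((2:ℝ)^m)⁻¹ < t) :
    haar (2^m) t = 0 := by
  have hm : ((2:ℝ)^(m+1))⁻¹ ≤ ((2:ℝ)^m)⁻¹ := inv_pow_le (by omega)
  rw [haar_pow, psi_zero_eq]
  simp only [ind]
  rw [if_neg (by rintro ⟨_, h2⟩; linarith), if_neg (by rintro ⟨_, h2⟩; linarith)]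
  ring

noncomputable def gfun (n : ℕ) : ℝ → ℝ := ∑ k ∈ Finset.range n, (4^k : ℝ) • haar (2^(2*k))

noncomputable def ffun (N : ℕ) : ℝ → ℝ := haar 0 + ∑ k ∈ Finset.range N, (2^k : ℝ) • haar (2^k)

lemma gfun_apply (n : ℕ) (t : ℝ) :
    gfun n t = ∑ k ∈ Finset.range n, (4:ℝ)^k * haar (2^(2*k)) t := by
  simp [gfun, Finset.sum_apply, Pi.smul_apply, smul_eq_mul]

lemma ffun_apply (N : ℕ) (t : ℝ) :
    ffun N t = haar 0 t + ∑ k ∈ Finset.range N, (2:ℝ)^k * haar (2^k) t := by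
  simp [ffun, Finset.sum_apply, Pi.smul_apply, smul_eq_mul]

lemma ind_split {a b c : ℝ} (t : ℝ) (hab : a ≤ b) (hbc : b ≤ c) :
    ind a c t = ind a b t + ind b c t := by
  simp only [ind]
  by_cases h1 : a < t ∧ t ≤ b <;> by_cases h2 : b < t ∧ t ≤ c
  · exact absurd (lt_of_le_of_lt h1.2 h2.1) (lt_irrefl t)
  · rw [if_pos h1, if_neg h2, if_pos ⟨h1.1, le_trans h1.2 hbc⟩]; ring
  · rw [if_neg h1, if_pos h2, if_pos ⟨lt_of_le_of_lt hab h2.1, h2.2⟩]; ring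
  · rw [if_neg h1, if_neg h2, if_neg ?_]
    · ring
    · rintro ⟨g1, g2⟩
      rcases le_or_gt t b with h | h
      · exact h1 ⟨g1, h⟩
      · exact h2 ⟨h, g2⟩

lemma ffun_eq (K : ℕ) : ffun K = ((2:ℝ)^K) • ind 0 (((2:ℝ)^K)⁻¹) := by
  induction K with
  | zero =>
    funext t
    simp [ffun, haar_zero_eq]
  | succ K ih =>
    have step : ffun (K+1) = ffun K + ((2:ℝ)^K) • haar (2^K) := by
      unfold ffun
      rw [Finset.sum_range_succ, ← add_assoc]
    rw [step, ih, haar_pow, psi_zero_eq]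
    funext t
    have hsplit := ind_split (a := 0) (b := ((2:ℝ)^(K+1))⁻¹) (c := ((2:ℝ)^K)⁻¹) t
      (le_of_lt (inv_pow_pos _)) (inv_pow_le (by omega))
    simp only [Pi.add_apply, Pi.smul_apply, smul_eq_mul, hsplit]
    ring
lemma gfun_shell_neg {n p : ℕ} (hp : p < n) {t : ℝ} (h0 : ((2:ℝ)^(2*p+1))⁻¹ < t)
    (h1 : t ≤ ((2:ℝ)^(2*p))⁻¹) :
    gfun n t = (∑ i ∈ Finset.range p, (4:ℝ)^i) - 4^p := by
  have ht0 : 0 < t := lt_trans (inv_pow_pos _) h0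
  rw [gfun_apply]
  have hv : ∀ i ∈ Finset.range n, (4:ℝ)^i * haar (2^(2*i)) t =
      (if i < p then (4:ℝ)^i else if i = p then -(4:ℝ)^p else 0) := by
    intro i _
    rcases lt_trichotomy i p with h | rfl | h
    · rw [if_pos h, haar_pow_val_pos ht0 (le_trans h1 (inv_pow_le (by omega))), mul_one]
    · rw [if_neg (lt_irrefl _), if_pos rfl, haar_pow_val_neg h0 h1]; ring
    · rw [if_neg (by omega), if_neg (by omega),
        haar_pow_val_out (lt_of_le_of_lt (inv_pow_le (by omega)) h0), mul_zero]
  rw [Finset.sum_congr rfl hv, ← Finset.sum_subset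
    (Finset.range_subset_range.mpr (by omega : p + 1 ≤ n))
    (fun i _ hi => by
      rw [if_neg (by simp at hi; omega), if_neg (by simp at hi; omega)]),
    Finset.sum_range_succ, if_neg (lt_irrefl _), if_pos rfl]
  rw [Finset.sum_congr rfl (fun i hi => by rw [if_pos (Finset.mem_range.mp hi)])]
  ring

lemma gfun_shell_pos {n p : ℕ} (hp : p + 1 ≤ n) {t : ℝ} (h0 : ((2:ℝ)^(2*p+2))⁻¹ < t)
    (h1 : t ≤ ((2:ℝ)^(2*p+1))⁻¹) :
    gfun n t = ∑ i ∈ Finset.range (p+1), (4:ℝ)^i := by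
  have ht0 : 0 < t := lt_trans (inv_pow_pos _) h0
  rw [gfun_apply]
  have hv : ∀ i ∈ Finset.range n, (4:ℝ)^i * haar (2^(2*i)) t =
      (if i < p + 1 then (4:ℝ)^i else 0) := by
    intro i _
    rcases lt_or_ge i (p+1) with h | h
    · rw [if_pos h, haar_pow_val_pos ht0 (le_trans h1 (inv_pow_le (by omega))), mul_one]
    · rw [if_neg (by omega),
        haar_pow_val_out (lt_of_le_of_lt (inv_pow_le (by omega)) h0), mul_zero]
  rw [Finset.sum_congr rfl hv, ← Finset.sum_subset (Finset.range_subset_range.mpr hp)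
    (fun i _ hi => by rw [if_neg (by simp at hi; omega)])]
  exact Finset.sum_congr rfl (fun i hi => by rw [if_pos (Finset.mem_range.mp hi)])

lemma gfun_inner {p : ℕ} {t : ℝ} (h0 : 0 < t) (h1 : t ≤ ((2:ℝ)^(2*p+1))⁻¹) :
    gfun (p+1) t = ∑ i ∈ Finset.range (p+1), (4:ℝ)^i := by
  rw [gfun_apply]
  exact Finset.sum_congr rfl (fun i hi => by
    rw [haar_pow_val_pos h0 (le_trans h1 (inv_pow_le (by simp at hi; omega))), mul_one])
lemma gfun_eq_fun (n : ℕ) : gfun n = fun t => ∑ k ∈ Finset.range n, (4:ℝ)^k * haar (2^(2*k)) t :=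
  funext (gfun_apply n)

lemma gfun_measurable (n : ℕ) : Measurable (gfun n) := by
  rw [gfun_eq_fun]
  exact Finset.measurable_sum _ (fun k _ => (haar_measurable (2^(2*k))).const_mul _)

lemma gfun_II (n : ℕ) (x y : ℝ) : IntervalIntegrable (gfun n) volume x y := by
  rw [gfun_eq_fun, intervalIntegrable_iff]
  exact MeasureTheory.integrable_finset_sum _
    (fun k _ => (intervalIntegrable_iff.mp (haar_II (2^(2*k)) x y)).const_mul _)

lemma abs_gfun_II (n : ℕ) (x y : ℝ) :
    IntervalIntegrable (fun t => |gfun n t|) volume x y := (gfun_II n x y).abs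

lemma integral_abs_const_on {a b c : ℝ} {h : ℝ → ℝ} (hab : a ≤ b)
    (hc : ∀ t ∈ Set.Ioc a b, h t = c) : ∫ t in a..b, |h t| = |c| * (b - a) := by
  rw [intervalIntegral.integral_of_le hab,
    MeasureTheory.setIntegral_congr_fun measurableSet_Ioc
      (fun t ht => show |h t| = |c| by rw [hc t ht]),
    MeasureTheory.setIntegral_const, Real.volume_real_Ioc_of_le hab, smul_eq_mul]
  ring

lemma sum_pow4_lt (q : ℕ) : ∑ i ∈ Finset.range q, (4:ℝ)^i < 4^q := by
  rw [geom_sum_eq (by norm_num)]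
  have : (0:ℝ) < 4^q := by positivity
  norm_num
  linarith

lemma sum_pow4_nonneg (q : ℕ) : 0 ≤ ∑ i ∈ Finset.range q, (4:ℝ)^i :=
  Finset.sum_nonneg (fun i _ => by positivity)

lemma Istep {n q : ℕ} (h : q + 1 ≤ n) :
    ∫ t in (0:ℝ)..((2:ℝ)^(2*q))⁻¹, |gfun n t| =
      (∫ t in (0:ℝ)..((2:ℝ)^(2*q+2))⁻¹, |gfun n t|)
      + (∑ i ∈ Finset.range (q+1), (4:ℝ)^i) * (((2:ℝ)^(2*q+1))⁻¹ - ((2:ℝ)^(2*q+2))⁻¹)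
      + ((4:ℝ)^q - ∑ i ∈ Finset.range q, (4:ℝ)^i) * (((2:ℝ)^(2*q))⁻¹ - ((2:ℝ)^(2*q+1))⁻¹) := by
  have h12 : ((2:ℝ)^(2*q+2))⁻¹ ≤ ((2:ℝ)^(2*q+1))⁻¹ := inv_pow_le (by omega)
  have h23 : ((2:ℝ)^(2*q+1))⁻¹ ≤ ((2:ℝ)^(2*q))⁻¹ := inv_pow_le (by omega)
  have split1 : (∫ t in ((2:ℝ)^(2*q+2))⁻¹..((2:ℝ)^(2*q+1))⁻¹, |gfun n t|)
      + (∫ t in ((2:ℝ)^(2*q+1))⁻¹..((2:ℝ)^(2*q))⁻¹, |gfun n t|)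
      = ∫ t in ((2:ℝ)^(2*q+2))⁻¹..((2:ℝ)^(2*q))⁻¹, |gfun n t| :=
    intervalIntegral.integral_add_adjacent_intervals (abs_gfun_II n _ _) (abs_gfun_II n _ _)
  have split2 : (∫ t in (0:ℝ)..((2:ℝ)^(2*q+2))⁻¹, |gfun n t|)
      + (∫ t in ((2:ℝ)^(2*q+2))⁻¹..((2:ℝ)^(2*q))⁻¹, |gfun n t|)
      = ∫ t in (0:ℝ)..((2:ℝ)^(2*q))⁻¹, |gfun n t| :=
    intervalIntegral.integral_add_adjacent_intervals (abs_gfun_II n _ _) (abs_gfun_II n _ _)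
  have m1 : ∫ t in ((2:ℝ)^(2*q+2))⁻¹..((2:ℝ)^(2*q+1))⁻¹, |gfun n t|
      = (∑ i ∈ Finset.range (q+1), (4:ℝ)^i) * (((2:ℝ)^(2*q+1))⁻¹ - ((2:ℝ)^(2*q+2))⁻¹) := by
    rw [integral_abs_const_on h12 (fun t ht => gfun_shell_pos h ht.1 ht.2),
      abs_of_nonneg (sum_pow4_nonneg _)]
  have m2 : ∫ t in ((2:ℝ)^(2*q+1))⁻¹..((2:ℝ)^(2*q))⁻¹, |gfun n t|
      = ((4:ℝ)^q - ∑ i ∈ Finset.range q, (4:ℝ)^i) * (((2:ℝ)^(2*q))⁻¹ - ((2:ℝ)^(2*q+1))⁻¹) := by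
    rw [integral_abs_const_on h23 (fun t ht => gfun_shell_neg (by omega) ht.1 ht.2),
      abs_of_neg (by linarith [sum_pow4_lt q])]
    ring
  rw [← split2, ← split1, m1, m2]
  ring

lemma mass_ge (q : ℕ) :
    2/3 ≤ (∑ i ∈ Finset.range (q+1), (4:ℝ)^i) * (((2:ℝ)^(2*q+1))⁻¹ - ((2:ℝ)^(2*q+2))⁻¹)
      + ((4:ℝ)^q - ∑ i ∈ Finset.range q, (4:ℝ)^i) * (((2:ℝ)^(2*q))⁻¹ - ((2:ℝ)^(2*q+1))⁻¹) := by
  have hP : (0:ℝ) < 4^q := by positivity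
  have e0 : (2:ℝ)^(2*q) = 4^q := by
    rw [pow_mul]; norm_num
  have e1 : (2:ℝ)^(2*q+1) = 2*4^q := by rw [pow_succ, e0]; ring
  have e2 : (2:ℝ)^(2*q+2) = 4*4^q := by rw [pow_succ, e1]; ring
  rw [geom_sum_eq (by norm_num), geom_sum_eq (by norm_num), e0, e1, e2]
  have key : ((4:ℝ)^(q+1) - 1)/(4-1) * ((2*4^q)⁻¹ - (4*4^q)⁻¹)
      + (4^q - ((4:ℝ)^q - 1)/(4-1)) * ((4^q)⁻¹ - (2*4^q)⁻¹) = 2/3 + (4^q)⁻¹/12 := by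
    have h1 : ((2:ℝ)*4^q)⁻¹ - (4*4^q)⁻¹ = (4*4^q)⁻¹ := by
      field_simp; ring
    have h2 : ((4:ℝ)^q)⁻¹ - (2*4^q)⁻¹ = (2*4^q)⁻¹ := by
      field_simp; ring
    rw [h1, h2, pow_succ]
    field_simp
    ring
  have hinv : (0:ℝ) < ((4:ℝ)^q)⁻¹ := by positivity
  rw [key]
  linarith

lemma Ichain (n' : ℕ) : ∀ d, d ≤ n' →
    1 + 2/3*(d:ℝ) ≤ ∫ t in (0:ℝ)..((2:ℝ)^(2*(n'-d)))⁻¹, |gfun (n'+1) t| := by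
  intro d
  induction d with
  | zero =>
    intro _
    simp only [Nat.sub_zero, Nat.cast_zero, mul_zero, add_zero]
    have h12 : (0:ℝ) ≤ ((2:ℝ)^(2*n'+1))⁻¹ := (inv_pow_pos _).le
    have h23 : ((2:ℝ)^(2*n'+1))⁻¹ ≤ ((2:ℝ)^(2*n'))⁻¹ := inv_pow_le (by omega)
    have split : (∫ t in (0:ℝ)..((2:ℝ)^(2*n'+1))⁻¹, |gfun (n'+1) t|)
        + (∫ t in ((2:ℝ)^(2*n'+1))⁻¹..((2:ℝ)^(2*n'))⁻¹, |gfun (n'+1) t|)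
        = ∫ t in (0:ℝ)..((2:ℝ)^(2*n'))⁻¹, |gfun (n'+1) t| :=
      intervalIntegral.integral_add_adjacent_intervals (abs_gfun_II _ _ _) (abs_gfun_II _ _ _)
    have m1 : ∫ t in (0:ℝ)..((2:ℝ)^(2*n'+1))⁻¹, |gfun (n'+1) t|
        = (∑ i ∈ Finset.range (n'+1), (4:ℝ)^i) * (((2:ℝ)^(2*n'+1))⁻¹ - 0) := by
      rw [integral_abs_const_on h12 (fun t ht => gfun_inner ht.1 ht.2),
        abs_of_nonneg (sum_pow4_nonneg _)]
    have m2 : ∫ t in ((2:ℝ)^(2*n'+1))⁻¹..((2:ℝ)^(2*n'))⁻¹, |gfun (n'+1) t|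
        = ((4:ℝ)^n' - ∑ i ∈ Finset.range n', (4:ℝ)^i)
          * (((2:ℝ)^(2*n'))⁻¹ - ((2:ℝ)^(2*n'+1))⁻¹) := by
      rw [integral_abs_const_on h23 (fun t ht => gfun_shell_neg (by omega) ht.1 ht.2),
        abs_of_neg (by linarith [sum_pow4_lt n'])]
      ring
    rw [← split, m1, m2, Finset.sum_range_succ]
    have e0 : (2:ℝ)^(2*n') = 4^n' := by rw [pow_mul]; norm_num
    have e1 : (2:ℝ)^(2*n'+1) = 2*4^n' := by rw [pow_succ, e0]; ring
    rw [e0, e1]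
    have hP : (0:ℝ) < 4^n' := by positivity
    have : (∑ i ∈ Finset.range n', (4:ℝ)^i + 4^n') * ((2*4^n')⁻¹ - 0)
        + ((4:ℝ)^n' - ∑ i ∈ Finset.range n', (4:ℝ)^i) * ((4^n')⁻¹ - (2*4^n')⁻¹) = 1 := by
      have h2 : ((4:ℝ)^n')⁻¹ - (2*4^n')⁻¹ = (2*4^n')⁻¹ := by field_simp; ring
      rw [h2, sub_zero]
      have : (∑ i ∈ Finset.range n', (4:ℝ)^i + 4^n') * (2*4^n')⁻¹
          + ((4:ℝ)^n' - ∑ i ∈ Finset.range n', (4:ℝ)^i) * (2*4^n')⁻¹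
          = (2*4^n') * (2*4^n')⁻¹ := by ring
      rw [this, mul_inv_cancel₀ (by positivity)]
    linarith
  | succ d ih =>
    intro hd
    have hq : n' - (d+1) + 1 = n' - d := by omega
    have step := Istep (n := n'+1) (q := n' - (d+1)) (by omega)
    have hexp : 2*(n' - (d+1)) + 2 = 2*(n' - d) := by omega
    rw [hexp] at step
    have ihh := ih (by omega)
    have mass := mass_ge (n' - (d+1))
    rw [hexp] at mass
    push_cast
    linarith
lemma pow_eq_pow_add_iff {k m0 j0 : ℕ} (hj0 : j0 < 2^m0) (h : 2^k = 2^m0 + j0) :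
    k = m0 ∧ j0 = 0 := by
  have h1 : 2^m0 ≤ 2^k := by omega
  have h2 : 2^k < 2^(m0+1) := by
    have : 2^(m0+1) = 2*2^m0 := by ring
    omega
  have e1 : m0 ≤ k := (Nat.pow_le_pow_iff_right (by norm_num)).mp h1
  have e2 : k < m0+1 := (Nat.pow_lt_pow_iff_right (by norm_num)).mp h2
  have : k = m0 := by omega
  subst this
  omega

lemma II_fun_sum {ι : Type*} {s : Finset ι} {f : ι → ℝ → ℝ} {x y : ℝ}
    (h : ∀ i ∈ s, IntervalIntegrable (f i) volume x y) :
    IntervalIntegrable (fun t => ∑ i ∈ s, f i t) volume x y := by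
  rw [intervalIntegrable_iff]
  exact MeasureTheory.integrable_finset_sum _ (fun i hi => intervalIntegrable_iff.mp (h i hi))

lemma ffun_mul_eq (N i0 : ℕ) : (fun t => ffun N t * haar i0 t) =
    fun t => haar 0 t * haar i0 t
      + ∑ k ∈ Finset.range N, (2:ℝ)^k * (haar (2^k) t * haar i0 t) := by
  funext t
  rw [ffun_apply, add_mul, Finset.sum_mul]
  congr 1
  exact Finset.sum_congr rfl (fun k _ => by ring)

lemma II_const_mul {f : ℝ → ℝ} {x y : ℝ} (c : ℝ) (h : IntervalIntegrable f volume x y) :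
    IntervalIntegrable (fun t => c * f t) volume x y := by
  rw [intervalIntegrable_iff]
  exact (intervalIntegrable_iff.mp h).const_mul _

lemma ffun_mul_II (N i0 : ℕ) : IntervalIntegrable (fun t => ffun N t * haar i0 t) volume 0 1 := by
  rw [ffun_mul_eq]
  exact (haar_mul_II 0 i0 0 1).add
    (II_fun_sum (fun k _ => II_const_mul _ (haar_mul_II (2^k) i0 0 1)))

lemma integral_ffun_mul (N : ℕ) {m0 j0 : ℕ} (hj0 : j0 < 2^m0) (hm0 : m0 < N) :
    ∫ t in (0:ℝ)..1, ffun N t * haar (2^m0 + j0) t = if j0 = 0 then 1 else 0 := by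
  have hrw := congrFun (ffun_mul_eq N (2^m0 + j0))
  simp only [hrw]
  rw [intervalIntegral.integral_add (haar_mul_II 0 _ 0 1)
      (II_fun_sum (fun k _ => II_const_mul _ (haar_mul_II (2^k) _ 0 1))),
    intervalIntegral.integral_finset_sum
      (fun k _ => II_const_mul _ (haar_mul_II (2^k) _ 0 1)),
    integral_haar_zero_mul (Nat.one_le_two_pow.trans (Nat.le_add_right _ _)), zero_add]
  simp only [intervalIntegral.integral_const_mul]
  have hterm : ∀ k ∈ Finset.range N,
      (2:ℝ)^k * ∫ t in (0:ℝ)..1, haar (2^k) t * haar (2^m0+j0) t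
      = if k = m0 ∧ j0 = 0 then 1 else 0 := by
    intro k _
    by_cases hcase : k = m0 ∧ j0 = 0
    · obtain ⟨rfl, rfl⟩ := hcase
      rw [if_pos ⟨rfl, rfl⟩]
      have : ∫ t in (0:ℝ)..1, haar (2^k) t * haar (2^k+0) t = ((2:ℝ)^k)⁻¹ := by
        simpa using integral_haar_sq (m := k) (j := 0) (by positivity)
      simp only [this]
      rw [mul_inv_cancel₀ (by positivity)]
    · rw [if_neg hcase]
      have hne : (2:ℕ)^k ≠ 2^m0 + j0 := fun h => hcase (pow_eq_pow_add_iff hj0 h)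
      rw [integral_haar_mul Nat.one_le_two_pow (Nat.one_le_two_pow.trans (Nat.le_add_right _ _)) hne, mul_zero]
  rw [Finset.sum_congr rfl hterm]
  by_cases hj : j0 = 0
  · subst hj
    simp only [and_true]
    rw [Finset.sum_ite_eq' (Finset.range N) m0 (fun _ => (1:ℝ)),
      if_pos (Finset.mem_range.mpr hm0)]
    simp
  · rw [if_neg hj, Finset.sum_eq_zero (fun k _ => by rw [if_neg (by tauto)])]

lemma integral_comb_mul (E : Finset ℕ) (l : ℕ → ℝ) (h1 : ∀ i ∈ E, 1 ≤ i)
    {i0 m0 j0 : ℕ} (hi0 : i0 ∈ E) (hdec : i0 = 2^m0 + j0) (hj0 : j0 < 2^m0) :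
    ∫ t in (0:ℝ)..1, (∑ i ∈ E, l i * haar i t) * haar i0 t = l i0 * ((2:ℝ)^m0)⁻¹ := by
  have heq : ∀ t, (∑ i ∈ E, l i * haar i t) * haar i0 t
      = ∑ i ∈ E, l i * (haar i t * haar i0 t) := fun t => by
    rw [Finset.sum_mul]; exact Finset.sum_congr rfl fun i _ => by ring
  simp only [heq]
  rw [intervalIntegral.integral_finset_sum
    (fun i _ => II_const_mul _ (haar_mul_II i i0 0 1))]
  simp only [intervalIntegral.integral_const_mul]
  rw [Finset.sum_eq_single_of_mem i0 hi0 (fun i hi hne => by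
    rw [integral_haar_mul (h1 i hi) (h1 i0 hi0) hne, mul_zero])]
  subst hdec
  rw [integral_haar_sq hj0]

lemma comb_mul_II (E : Finset ℕ) (l : ℕ → ℝ) (i0 : ℕ) :
    IntervalIntegrable (fun t => (∑ i ∈ E, l i * haar i t) * haar i0 t) volume 0 1 := by
  have heq : ∀ t, (∑ i ∈ E, l i * haar i t) * haar i0 t
      = ∑ i ∈ E, l i * (haar i t * haar i0 t) := fun t => by
    rw [Finset.sum_mul]; exact Finset.sum_congr rfl fun i _ => by ring
  simp only [heq]
  exact II_fun_sum (fun i _ => II_const_mul _ (haar_mul_II i i0 0 1))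
lemma ind_nonneg (a b t : ℝ) : 0 ≤ ind a b t := by
  simp only [ind]; split_ifs <;> norm_num

lemma ffun_L1 (K : ℕ) : ∫ t in (0:ℝ)..1, |ffun K t| = 1 := by
  rw [ffun_eq]
  have habs : ∀ t, |(((2:ℝ)^K) • ind 0 (((2:ℝ)^K)⁻¹)) t|
      = (2:ℝ)^K * ind 0 (((2:ℝ)^K)⁻¹) t := by
    intro t
    rw [Pi.smul_apply, smul_eq_mul, abs_mul, abs_of_nonneg (by positivity : (0:ℝ) ≤ (2:ℝ)^K),
      abs_of_nonneg (ind_nonneg _ _ _)]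
  simp only [habs]
  rw [intervalIntegral.integral_const_mul]
  have hub : ((2:ℝ)^K)⁻¹ ≤ 1 := by
    have := inv_pow_le (a := K) (b := 0) (Nat.zero_le _)
    simpa using this
  rw [integral_ind le_rfl hub, sub_zero, max_eq_left (inv_pow_pos K).le,
    mul_inv_cancel₀ (by positivity)]
/-- the `L²`-orthogonal projection `Q` from
`X = span{h_i : i < 2^{2n}} ⊂ L¹[0,1]` onto the even Haar levels
`Y = span(⋃_{k<n} H_{2k})` has `L¹` operator norm at least `(2n+1)/3`. -/
theorem stmt12 (n : ℕ) (hn : 1 ≤ n)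
    (X Y : Submodule ℝ (ℝ → ℝ))
    (hX : X = Submodule.span ℝ (haar '' Set.Iio (2 ^ (2 * n))))
    (hY : Y = Submodule.span ℝ (⋃ k ∈ Finset.range n, haarLevel (2 * k)))
    (Q : (ℝ → ℝ) →ₗ[ℝ] (ℝ → ℝ))
    (hQ1 : ∀ f ∈ X, Q f ∈ Y) (hQ2 : ∀ f ∈ Y, Q f = f)
    (hQ3 : ∀ f ∈ X, ∀ g ∈ Y, L2inner (f - Q f) g = 0)
    (K : ℝ) (hK : ∀ f ∈ X, L1normI (Q f) ≤ K * L1normI f) :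
    (2 * n + 1 : ℝ) / 3 ≤ K := by
  classical
  obtain ⟨n', rfl⟩ : ∃ n', n = n' + 1 := ⟨n - 1, by omega⟩
  set E : Finset ℕ := (Finset.range (n'+1)).biUnion (fun k => Finset.Ico (2^(2*k)) (2^(2*k+1)))
    with hE
  have hEmem : ∀ i ∈ E, ∃ k j, k < n'+1 ∧ j < 2^(2*k) ∧ i = 2^(2*k)+j := by
    intro i hi
    rw [hE, Finset.mem_biUnion] at hi
    obtain ⟨k, hk, hik⟩ := hi
    rw [Finset.mem_Ico] at hik
    refine ⟨k, i - 2^(2*k), Finset.mem_range.mp hk, ?_, by omega⟩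
    have : 2^(2*k+1) = 2*2^(2*k) := by ring
    omega
  have hmemE : ∀ k j, k < n'+1 → j < 2^(2*k) → 2^(2*k)+j ∈ E := by
    intro k j hk hj
    rw [hE, Finset.mem_biUnion]
    refine ⟨k, Finset.mem_range.mpr hk, Finset.mem_Ico.mpr ⟨by omega, ?_⟩⟩
    have : 2^(2*k+1) = 2*2^(2*k) := by ring
    omega
  have hE1 : ∀ i ∈ E, 1 ≤ i := fun i hi => by
    obtain ⟨k, j, _, _, rfl⟩ := hEmem i hi
    exact Nat.one_le_two_pow.trans (Nat.le_add_right _ _)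
  have hYmem : ∀ i ∈ E, haar i ∈ Y := by
    intro i hi
    obtain ⟨k, j, hk, hj, rfl⟩ := hEmem i hi
    rw [hY]
    apply Submodule.subset_span
    refine Set.mem_iUnion₂.mpr ⟨k, Finset.mem_range.mpr hk, ?_⟩
    refine ⟨2^(2*k)+j, Set.mem_Ico.mpr ⟨Nat.le_add_right _ _, ?_⟩, rfl⟩
    have : 2^(2*k+1) = 2*2^(2*k) := by ring
    omega
  have hfX : ffun (2*n'+1) ∈ X := by
    rw [hX]
    apply Submodule.add_mem
    · exact Submodule.subset_span ⟨0, by simp, rfl⟩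
    · refine Submodule.sum_mem _ (fun k hk => Submodule.smul_mem _ _ (Submodule.subset_span
        ⟨2^k, ?_, rfl⟩))
      simp only [Set.mem_Iio]
      refine (Nat.pow_lt_pow_iff_right (by norm_num : 1 < 2)).mpr ?_
      have := Finset.mem_range.mp hk
      omega
  have hQfY := hQ1 _ hfX
  have hY' : Y = Submodule.span ℝ (haar '' (E : Set ℕ)) := by
    rw [hY]
    congr 1
    have hcoe : (E : Set ℕ) = ⋃ k ∈ Finset.range (n'+1), Set.Ico ((2:ℕ)^(2*k)) (2^(2*k+1)) := by
      rw [hE]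
      simp [Finset.coe_biUnion, Finset.coe_Ico]
    rw [hcoe, Set.image_iUnion₂]
    rfl
  rw [hY'] at hQfY
  obtain ⟨l, hlsupp, hlrep⟩ := (Finsupp.mem_span_image_iff_linearCombination ℝ).mp hQfY
  have hsupp : l.support ⊆ E := by
    have := (Finsupp.mem_supported ℝ l).mp hlsupp
    exact_mod_cast this
  have hrep : Q (ffun (2*n'+1)) = ∑ i ∈ E, l i • haar i := by
    rw [← hlrep, Finsupp.linearCombination_apply, Finsupp.sum]
    exact Finset.sum_subset hsupp
      (fun i _ hi => by rw [Finsupp.notMem_support_iff.mp hi, zero_smul])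
  have hQft : ∀ t, Q (ffun (2*n'+1)) t = ∑ i ∈ E, l i * haar i t := by
    intro t
    rw [hrep]
    simp [Finset.sum_apply]
  have hcoef : ∀ k j, k < n'+1 → j < 2^(2*k) →
      l (2^(2*k)+j) = if j = 0 then (4:ℝ)^k else 0 := by
    intro k j hk hj
    have hiE := hmemE k j hk hj
    have horth := hQ3 _ hfX (haar (2^(2*k)+j)) (hYmem _ hiE)
    rw [L2inner] at horth
    have hsub : ∀ t, (ffun (2*n'+1) - Q (ffun (2*n'+1))) t * haar (2^(2*k)+j) t
        = ffun (2*n'+1) t * haar (2^(2*k)+j) t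
          - (∑ i ∈ E, l i * haar i t) * haar (2^(2*k)+j) t := by
      intro t
      rw [Pi.sub_apply, hQft t]
      ring
    simp only [hsub] at horth
    rw [intervalIntegral.integral_sub (ffun_mul_II _ _) (comb_mul_II E l _),
      integral_ffun_mul _ hj (by omega), integral_comb_mul E l hE1 hiE rfl hj] at horth
    have hpow : ((2:ℝ)^(2*k)) = (4:ℝ)^k := by rw [pow_mul]; norm_num
    have h4 : (0:ℝ) < (4:ℝ)^k := by positivity
    rw [hpow] at horth
    by_cases hj0 : j = 0
    · rw [if_pos hj0] at horth ⊢
      have : l (2^(2*k)+j) * ((4:ℝ)^k)⁻¹ = 1 := by linarith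
      field_simp at this
      linarith
    · rw [if_neg hj0] at horth ⊢
      have : l (2^(2*k)+j) * ((4:ℝ)^k)⁻¹ = 0 := by linarith
      rcases mul_eq_zero.mp this with h | h
      · exact h
      · exact absurd h (by positivity)
  have hQG : Q (ffun (2*n'+1)) = gfun (n'+1) := by
    funext t
    rw [hQft t, gfun_apply]
    have hPE : (Finset.range (n'+1)).image (fun k => 2^(2*k)) ⊆ E := by
      intro i hi
      rw [Finset.mem_image] at hi
      obtain ⟨k, hk, rfl⟩ := hi
      have := hmemE k 0 (Finset.mem_range.mp hk) (by positivity)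
      simpa using this
    rw [← Finset.sum_subset hPE (fun i hiE hiP => ?_)]
    · rw [Finset.sum_image (fun a _ b _ h => by
        have := Nat.pow_right_injective (le_refl 2) h
        omega)]
      refine Finset.sum_congr rfl (fun k hk => ?_)
      have hc := hcoef k 0 (Finset.mem_range.mp hk) (by positivity)
      rw [if_pos rfl] at hc
      rw [show (2:ℕ)^(2*k) + 0 = 2^(2*k) from rfl] at hc
      rw [hc]
    · obtain ⟨k, j, hk, hj, rfl⟩ := hEmem i hiE
      have hj0 : j ≠ 0 := by
        rintro rfl
        exact hiP (Finset.mem_image.mpr ⟨k, Finset.mem_range.mpr hk, by simp⟩)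
      rw [hcoef k j hk hj, if_neg hj0, zero_mul]
  have hKf := hK _ hfX
  have hf1 : L1normI (ffun (2*n'+1)) = 1 := ffun_L1 _
  have hQL1 : L1normI (Q (ffun (2*n'+1))) = ∫ t in (0:ℝ)..1, |gfun (n'+1) t| := by
    rw [hQG, L1normI]
  have hI := Ichain n' n' le_rfl
  rw [Nat.sub_self, mul_zero, pow_zero, inv_one] at hI
  rw [hf1, mul_one, hQL1] at hKf
  push_cast
  linarith
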